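/- If SCH holds above an infinite cardinal θ and μ is regular, then every cardinal λ strictly greater than sup_{θ₀ < θ} θ₀^{<μ} which is not the successor of a cardinal of cofinality strictly less than μ is μ-closed. -/

import Mathlib

open Cardinal

universe u

/-- `SCH` holds at `λ`: `λ^{cf λ} = max(2^{cf λ}, λ⁺)`. -/
def SCHAt (lam : Cardinal.{u}) : Prop :=
  lam ^ lam.ord.cof = max (2 ^ lam.ord.cof) (Order.succ lam)

open Order in
/-- If the exponent is below the cofinality, every function is bounded, giving the
classical bound `κ ^ c ≤ κ * sup_{β<κ} β ^ c`. -/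
lemma lemA {κ c T : Cardinal.{u}} (hc : c < κ.ord.cof)
    (hT : ∀ β < κ, β ^ c ≤ T) : κ ^ c ≤ κ * T := by
  haveI : IsWellOrder κ.ord.ToType (· < ·) := isWellOrder_lt
  have hκα : #κ.ord.ToType = κ := by rw [mk_toType, card_ord]
  have hγ : #c.out = c := mk_out c
  have hbdd : ∀ f : c.out → κ.ord.ToType, ∃ a : κ.ord.ToType, ∀ i, f i < a := by
    intro f
    have h1 : #(Set.range f) < Ordinal.cof (Ordinal.type ((· < ·) : κ.ord.ToType → κ.ord.ToType → Prop)) := by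
      rw [Ordinal.type_toType]
      exact lt_of_le_of_lt (mk_range_le.trans_eq hγ) hc
    have hnc : ¬ IsCofinal (Set.range f) := fun hc' =>
      not_le.2 h1 (by rw [Ordinal.cof_type]; exact Order.cof_le hc')
    obtain ⟨a, ha⟩ : ∃ a, ∀ y ∈ Set.range f, y < a := by
      simp only [IsCofinal, not_forall, not_exists, not_and, not_le] at hnc
      exact hnc
    exact ⟨a, fun i => ha _ (Set.mem_range_self i)⟩
  choose bnd hbnd using hbdd
  have hinj : Function.Injective
      (fun f : c.out → κ.ord.ToType =>
        (⟨bnd f, fun i => ⟨f i, hbnd f i⟩⟩ : Σ a : κ.ord.ToType, (c.out → Set.Iio a))) := by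
    intro f g h
    funext i
    exact congrArg (fun p : (Σ a : κ.ord.ToType, (c.out → Set.Iio a)) => (p.2 i : κ.ord.ToType)) h
  have h2 : κ ^ c ≤ #(Σ a : κ.ord.ToType, (c.out → Set.Iio a)) := by
    have h := power_def κ.ord.ToType c.out
    rw [hκα, hγ] at h
    rw [h]
    exact mk_le_of_injective hinj
  have h3 : #(Σ a : κ.ord.ToType, (c.out → Set.Iio a)) = sum fun a : κ.ord.ToType => #(Set.Iio a) ^ c := by
    rw [mk_sigma]
    congr 1
    funext a
    have h := power_def (Set.Iio a) c.out
    rw [hγ] at h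
    exact h.symm
  have h4 : (sum fun a : κ.ord.ToType => #(Set.Iio a) ^ c) ≤ sum fun _ : κ.ord.ToType => T :=
    sum_le_sum _ _ fun a => hT _ (mk_Iio_ord_toType a)
  have h5 : (sum fun _ : κ.ord.ToType => T) = κ * T := by rw [sum_const' κ.ord.ToType T, hκα]
  exact h2.trans (h3.le.trans (h4.trans h5.le))

lemma prod_pow_le {ι : Type u} (f : ι → Cardinal.{u}) (c : Cardinal.{u}) :
    (prod f) ^ c ≤ prod fun i => f i ^ c := by
  have h1 : prod f ^ c = #(c.out → ∀ i, (f i).out) := by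
    have h := power_def (∀ i, (f i).out) c.out
    rw [mk_out] at h
    exact h
  have h2 : (prod fun i => f i ^ c) = #(∀ i, c.out → (f i).out) := by
    rw [mk_pi fun i => c.out → (f i).out]
    congr 1
    funext i
    have h := power_def ((f i).out) c.out
    rw [mk_out, mk_out] at h
    exact h
  rw [h1, h2]
  exact (mk_congr (Equiv.piComm fun _ _ => _)).le

open Order in
/-- Decomposition of a power of a limit cardinal along a cofinal family. -/
lemma lemB {κ c T : Cardinal.{u}} (hκ : ℵ₀ ≤ κ) (hlim : ∀ β < κ, succ β < κ)
    (hT : ∀ β < κ, β ^ c ≤ T) : κ ^ c ≤ T ^ κ.ord.cof := by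
  obtain ⟨ι, f, hlsub, hcard⟩ := Ordinal.exists_lsub_cof κ.ord
  set g : ι → Cardinal.{u} := fun i => succ ((f i).card + 1) with hg
  have hgκ : ∀ i, g i < κ := by
    intro i
    apply hlim
    have h1 : (f i).card < κ := by
      rw [← Cardinal.lt_ord, ← hlsub]
      exact Ordinal.lt_lsub f i
    exact add_lt_of_lt hκ h1 (one_lt_aleph0.trans_le hκ)
  have hκle : κ ≤ prod g := by
    have h1 : κ ≤ sum fun i => (f i).card + 1 := by
      have h3 : κ = (Ordinal.lsub f).card := by rw [hlsub, card_ord]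
      rw [h3]
      have h4 : Ordinal.lsub f = ⨆ i, Order.succ (f i) := rfl
      rw [h4]
      refine (Ordinal.card_iSup_le_sum_card _).trans ?_
      refine (sum_le_sum _ _ fun i => ?_)
      rw [Ordinal.card_succ]
    refine h1.trans (le_of_lt ?_)
    exact sum_lt_prod _ _ fun i => lt_succ _
  calc κ ^ c ≤ (prod g) ^ c := power_le_power_right hκle
    _ ≤ prod fun i => g i ^ c := prod_pow_le g c
    _ ≤ prod fun _ : ι => T := prod_le_prod _ _ fun i => hT _ (hgκ i)
    _ = T ^ #ι := prod_const' ι T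
    _ = T ^ κ.ord.cof := by rw [hcard]

lemma pow_le_of_le_two_power {κ c : Cardinal.{u}} (h : κ ≤ 2 ^ c) (hc : ℵ₀ ≤ c) :
    κ ^ c ≤ 2 ^ c := by
  calc κ ^ c ≤ (2 ^ c) ^ c := power_le_power_right h
    _ = 2 ^ (c * c) := (power_mul).symm
    _ = 2 ^ c := by rw [mul_eq_self hc]

open Order in
lemma limit_of_cof_le {κ c : Cardinal.{u}} (hκ : ℵ₀ ≤ κ) (h2c : 2 ^ c < κ)
    (hcof : κ.ord.cof ≤ c) : ∀ β < κ, succ β < κ := by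
  intro β hβ
  by_contra hcon
  push_neg at hcon
  have hβκ : κ = succ β := le_antisymm hcon (Order.succ_le_of_lt hβ)
  have hβi : ℵ₀ ≤ β := by
    by_contra hfin
    push_neg at hfin
    obtain ⟨n, rfl⟩ := lt_aleph0.1 hfin
    have h1 : ((n : Cardinal.{u})) < (n : Cardinal.{u}) + 1 := by
      exact_mod_cast Nat.lt_succ_self n
    have h2 : succ ((n : Cardinal.{u})) ≤ (n : Cardinal.{u}) + 1 := Order.succ_le_of_lt h1
    have h3 : ((n : Cardinal.{u})) + 1 < ℵ₀ := by
      have : (((n + 1 : ℕ)) : Cardinal.{u}) < ℵ₀ := nat_lt_aleph0 (n + 1)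
      simpa using this
    have : κ < ℵ₀ := hβκ ▸ (h2.trans_lt h3)
    exact absurd hκ (not_le.2 this)
  have hreg := isRegular_succ hβi
  have hcofeq : κ.ord.cof = κ := by rw [hβκ]; exact hreg.cof_eq
  rw [hcofeq] at hcof
  have : c < κ := (cantor c).trans h2c
  exact absurd hcof (not_le.2 this)

open Order in
/-- Under SCH above `θ`, `κ ^ c ≤ max (θ ^ c) κ⁺` for all `κ ≥ θ`. -/
lemma claimF {θ : Cardinal.{u}} (hθ : ℵ₀ ≤ θ) (hsch : ∀ lam : Cardinal.{u}, θ ≤ lam → SCHAt lam)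
    {c : Cardinal.{u}} (hc : ℵ₀ ≤ c) :
    ∀ κ : Cardinal.{u}, θ ≤ κ → κ ^ c ≤ max (θ ^ c) (succ κ) := by
  have h2θ : (2 : Cardinal.{u}) ≤ θ := by
    refine le_trans ?_ hθ
    exact (nat_lt_aleph0 2).le.trans_eq (by norm_num)
  intro κ
  refine Cardinal.lt_wf.induction
    (C := fun κ => θ ≤ κ → κ ^ c ≤ max (θ ^ c) (succ κ)) κ ?_
  intro κ IH hθκ
  have hκi : ℵ₀ ≤ κ := hθ.trans hθκ
  rcases le_or_gt κ (2 ^ c) with h2c | h2c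
  · refine le_max_of_le_left ?_
    exact (pow_le_of_le_two_power h2c hc).trans (power_le_power_right h2θ)
  · have hTb : ∀ β < κ, β ^ c ≤ max (θ ^ c) κ := by
      intro β hβ
      rcases lt_or_ge β θ with h | h
      · exact le_max_of_le_left (power_le_power_right h.le)
      · exact (IH β hβ h).trans (max_le_max le_rfl (Order.succ_le_of_lt hβ))
    rcases lt_or_ge c κ.ord.cof with hcof | hcof
    · have hA := lemA hcof hTb
      have hmaxi : ℵ₀ ≤ max (θ ^ c) κ := le_max_of_le_right hκi
      have hκ0 : κ ≠ 0 := ne_of_gt (aleph0_pos.trans_le hκi)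
      calc κ ^ c ≤ κ * max (θ ^ c) κ := hA
        _ = max (θ ^ c) κ := mul_eq_right hmaxi (le_max_right _ _) hκ0
        _ ≤ max (θ ^ c) (succ κ) := max_le_max le_rfl (le_succ κ)
    · have hlim := limit_of_cof_le hκi h2c hcof
      have hB := lemB hκi hlim hTb
      rcases le_or_gt (θ ^ c) κ with hθκ' | hθκ'
      · rw [max_eq_right hθκ'] at hB
        have hs := hsch κ hθκ
        rw [SCHAt] at hs
        refine hB.trans ?_
        rw [hs]
        apply max_le
        · refine le_max_of_le_left ?_
          calc (2 : Cardinal.{u}) ^ κ.ord.cof ≤ 2 ^ c :=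
                power_le_power_left two_ne_zero hcof
            _ ≤ θ ^ c := power_le_power_right h2θ
        · exact le_max_right _ _
      · rw [max_eq_left hθκ'.le] at hB
        refine hB.trans (le_max_of_le_left ?_)
        have hcof0 : κ.ord.cof ≠ 0 := by
          rw [Ordinal.cof_ne_zero]
          rw [Ne, Cardinal.ord_eq_zero]
          exact ne_of_gt (aleph0_pos.trans_le hκi)
        rw [← power_mul]
        have hmul : c * κ.ord.cof = c := mul_eq_left hc hcof hcof0
        rw [hmul]

open Order in
/-- `θ ^ c ≤ S⁺` for infinite `c < μ`. -/
lemma claimG {θ S μ : Cardinal.{u}} (hθ : ℵ₀ ≤ θ)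
    (hsch : ∀ lam : Cardinal.{u}, θ ≤ lam → SCHAt lam)
    (hS2 : ∀ c' < μ, (2 : Cardinal.{u}) ^ c' ≤ S)
    (hSsmall : ∀ β < θ, ∀ c' < μ, β ^ c' ≤ S)
    (hSS : S < θ → S ^< μ ≤ S)
    (hθS' : θ ≤ succ S)
    {c : Cardinal.{u}} (hc : ℵ₀ ≤ c) (hcμ : c < μ) : θ ^ c ≤ succ S := by
  have hSi : ℵ₀ ≤ S := (cantor ℵ₀).le.trans (hS2 ℵ₀ (hc.trans_lt hcμ))
  have hsSi : ℵ₀ ≤ succ S := hSi.trans (le_succ S)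
  rcases le_or_gt θ (2 ^ c) with h | h
  · exact (pow_le_of_le_two_power h hc).trans ((hS2 c hcμ).trans (le_succ S))
  · rcases lt_or_ge c θ.ord.cof with hcof | hcof
    · have hA := lemA hcof (fun β hβ => hSsmall β hβ c hcμ)
      calc θ ^ c ≤ θ * S := hA
        _ ≤ succ S * succ S := mul_le_mul' hθS' (le_succ S)
        _ = succ S := mul_eq_self hsSi
    · have hlim := limit_of_cof_le hθ h hcof
      have hB := lemB hθ hlim (fun β hβ => hSsmall β hβ c hcμ)
      have hcofθi : ℵ₀ ≤ θ.ord.cof := Ordinal.aleph0_le_cof.2 (Cardinal.isSuccLimit_ord hθ)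
      have hcofθμ : θ.ord.cof < μ := lt_of_le_of_lt hcof hcμ
      rcases lt_or_ge S θ with hSθ | hθS''
      · exact hB.trans (((le_powerlt S hcofθμ).trans (hSS hSθ)).trans (le_succ S))
      · have hF := claimF hθ hsch hcofθi S hθS''
        refine hB.trans (hF.trans ?_)
        apply max_le _ le_rfl
        have hs := hsch θ le_rfl
        rw [SCHAt] at hs
        rw [hs]
        exact max_le ((hS2 _ hcofθμ).trans (le_succ S)) (succ_le_succ hθS'')

open Order in
/-- When `λ = S⁺` forces `μ ≤ cf S`: joint induction showing `θ^c ≤ S` and `S^c ≤ S`. -/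
lemma claimN {θ S μ : Cardinal.{u}} (hθ : ℵ₀ ≤ θ)
    (hsch : ∀ lam : Cardinal.{u}, θ ≤ lam → SCHAt lam)
    (hθS : θ ≤ S) (hμcof : μ ≤ S.ord.cof)
    (hS2 : ∀ c' < μ, (2 : Cardinal.{u}) ^ c' ≤ S)
    (hSsmall : ∀ β < θ, ∀ c' < μ, β ^ c' ≤ S) :
    ∀ c : Cardinal.{u}, ℵ₀ ≤ c → c < μ → θ ^ c ≤ S ∧ S ^ c ≤ S := by
  intro c
  refine Cardinal.lt_wf.induction
    (C := fun c => ℵ₀ ≤ c → c < μ → θ ^ c ≤ S ∧ S ^ c ≤ S) c ?_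
  intro c IH hc hcμ
  have hSi : ℵ₀ ≤ S := hθ.trans hθS
  have hθ0 : θ ≠ 0 := ne_of_gt (aleph0_pos.trans_le hθ)
  have hθc : θ ^ c ≤ S := by
    rcases le_or_gt θ (2 ^ c) with h | h
    · exact (pow_le_of_le_two_power h hc).trans (hS2 c hcμ)
    · rcases lt_or_ge c θ.ord.cof with hcof | hcof
      · have hA := lemA hcof (fun β hβ => hSsmall β hβ c hcμ)
        calc θ ^ c ≤ θ * S := hA
          _ = S := mul_eq_right hSi hθS hθ0
      · have hlim := limit_of_cof_le hθ h hcof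
        have hcofθi : ℵ₀ ≤ θ.ord.cof := Ordinal.aleph0_le_cof.2 (Cardinal.isSuccLimit_ord hθ)
        have hθltS : θ < S := by
          rcases hθS.lt_or_eq with h' | h'
          · exact h'
          · exfalso
            have : S.ord.cof ≤ c := h' ▸ hcof
            exact absurd (hμcof.trans this) (not_le.2 hcμ)
        rcases eq_or_lt_of_le hcof with heq | hlt
        · have hs := hsch θ le_rfl
          rw [SCHAt] at hs
          rw [← heq, hs]
          refine max_le (hS2 _ ?_) (Order.succ_le_of_lt hθltS)
          rw [heq]; exact hcμ
        · have hB := lemB hθ hlim (fun β hβ => hSsmall β hβ c hcμ)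
          exact hB.trans (IH θ.ord.cof hlt hcofθi (hlt.trans hcμ)).2
  refine ⟨hθc, ?_⟩
  have hTb : ∀ β < S, β ^ c ≤ S := by
    intro β hβ
    rcases lt_or_ge β θ with h | h
    · exact hSsmall β h c hcμ
    · exact (claimF hθ hsch hc β h).trans (max_le hθc (Order.succ_le_of_lt hβ))
  have hA := lemA (lt_of_lt_of_le hcμ hμcof) hTb
  calc S ^ c ≤ S * S := hA
    _ = S := mul_eq_self hSi

open Order in
/-- If SCH holds above an infinite cardinal `θ` and `μ` is regular, then every cardinal `λ`
strictly greater than `sup_{θ₀ < θ} θ₀^{<μ}` which is not the successor of a cardinal of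
cofinality `< μ` is `μ`-closed. -/
theorem stmt3 {θ : Cardinal.{u}} (hθ : ℵ₀ ≤ θ) (hsch : ∀ lam : Cardinal.{u}, θ ≤ lam → SCHAt lam)
    {μ : Cardinal.{u}} (hμ : μ.IsRegular) (lam : Cardinal.{u})
    (hgt : (⨆ θ₀ : Set.Iio θ, (θ₀ : Cardinal.{u}) ^< μ) < lam)
    (hnsucc : ¬ ∃ κ : Cardinal.{u}, lam = Order.succ κ ∧ κ.ord.cof < μ) :
    ∀ θ₀ < lam, θ₀ ^< μ < lam := by
  intro θ₀ hθ₀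
  set S := (⨆ θ₀ : Set.Iio θ, (θ₀ : Cardinal.{u}) ^< μ) with hSdef
  have hbdd : BddAbove (Set.range fun θ₀ : Set.Iio θ => (θ₀ : Cardinal.{u}) ^< μ) := by
    refine ⟨θ ^< μ, ?_⟩
    rintro x ⟨⟨β, hβ⟩, rfl⟩
    exact powerlt_le.2 fun y hy => (power_le_power_right hβ.le).trans (le_powerlt θ hy)
  have hF0 : ∀ β < θ, β ^< μ ≤ S := fun β hβ =>
    le_ciSup hbdd (⟨β, hβ⟩ : Set.Iio θ)
  have h1μ : (1 : Cardinal.{u}) < μ := one_lt_aleph0.trans_le hμ.aleph0_le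
  have hSsmall : ∀ β < θ, ∀ c < μ, β ^ c ≤ S := fun β hβ c hc =>
    (le_powerlt β hc).trans (hF0 β hβ)
  have h2θ : (2 : Cardinal.{u}) < θ := by
    refine lt_of_lt_of_le ?_ hθ
    exact (nat_lt_aleph0 2).trans_eq' (by norm_num)
  have hS2 : ∀ c < μ, (2 : Cardinal.{u}) ^ c ≤ S := fun c hc => hSsmall 2 h2θ c hc
  have hSlt : S < lam := hgt
  have hθS' : θ ≤ succ S := by
    by_contra hcon
    push_neg at hcon
    have h1 : succ S ≤ succ S ^< μ := by
      have h := le_powerlt (succ S) h1μ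
      rwa [power_one] at h
    have h2 : succ S ≤ S := h1.trans (hF0 _ hcon)
    exact absurd h2 (not_le.2 (lt_succ S))
  rcases lt_or_ge θ₀ θ with hcase | hθθ₀
  · exact (hF0 θ₀ hcase).trans_lt hSlt
  have hθ₀i : ℵ₀ ≤ θ₀ := hθ.trans hθθ₀
  rcases eq_or_lt_of_le (Order.succ_le_of_lt hSlt) with hSeq | hSlt2
  · -- lam = succ S
    have hcofS : μ ≤ S.ord.cof := by
      by_contra hcon
      push_neg at hcon
      exact hnsucc ⟨S, hSeq.symm, hcon⟩
    have hθ₀S : θ₀ ≤ S := by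
      have : θ₀ < succ S := hSeq ▸ hθ₀
      exact Order.lt_succ_iff.1 this
    have hθS : θ ≤ S := hθθ₀.trans hθ₀S
    have hle : θ₀ ^< μ ≤ S := by
      refine powerlt_le.2 fun x hx => ?_
      rcases lt_or_ge x ℵ₀ with hfin | hinf
      · exact (pow_le hθ₀i hfin).trans hθ₀S
      · exact (power_le_power_right hθ₀S).trans
          ((claimN hθ hsch hθS hcofS hS2 hSsmall x hinf hx).2)
    exact hle.trans_lt hSlt
  · -- succ S < lam
    have hG : ∀ x : Cardinal.{u}, ℵ₀ ≤ x → x < μ → θ ^ x ≤ succ S := fun x h1 h2 =>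
      claimG hθ hsch hS2 hSsmall (fun h => hF0 S h) hθS' h1 h2
    rcases eq_or_lt_of_le (Order.succ_le_of_lt hθ₀) with hEq | hlt2
    · -- lam = succ θ₀
      have hcof : μ ≤ θ₀.ord.cof := by
        by_contra hcon
        push_neg at hcon
        exact hnsucc ⟨θ₀, hEq.symm, hcon⟩
      have hSθ₀ : succ S ≤ θ₀ := by
        have : succ S < succ θ₀ := hEq ▸ hSlt2
        exact Order.lt_succ_iff.1 this
      have hle : θ₀ ^< μ ≤ θ₀ := by
        refine powerlt_le.2 fun x hx => ?_
        rcases lt_or_ge x ℵ₀ with hfin | hinf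
        · exact pow_le hθ₀i hfin
        · have hTb : ∀ β < θ₀, β ^ x ≤ θ₀ := by
            intro β hβ
            rcases lt_or_ge β θ with h | h
            · exact (hSsmall β h x hx).trans ((le_succ S).trans hSθ₀)
            · exact (claimF hθ hsch hinf β h).trans
                (max_le ((hG x hinf hx).trans hSθ₀) (Order.succ_le_of_lt hβ))
          have hA := lemA (hx.trans_le hcof) hTb
          calc θ₀ ^ x ≤ θ₀ * θ₀ := hA
            _ = θ₀ := mul_eq_self hθ₀i
      exact hle.trans_lt hθ₀
    · -- both strict
      have hle : θ₀ ^< μ ≤ max (succ S) (succ θ₀) := by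
        refine powerlt_le.2 fun x hx => ?_
        rcases lt_or_ge x ℵ₀ with hfin | hinf
        · exact le_max_of_le_right ((pow_le hθ₀i hfin).trans (le_succ θ₀))
        · exact (claimF hθ hsch hinf θ₀ hθθ₀).trans (max_le_max (hG x hinf hx) le_rfl)
      exact hle.trans_lt (max_lt hSlt2 hlt2)
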